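/- For every d ≥ 1, k with 0 ≤ k ≤ d, and n ≥ 0, the number of integer points x ∈ ℤ^d with |x_1| + ⋯ + |x_k| + x_{k+1} + ⋯ + x_d ≤ n and x_{k+1},…,x_d ≥ 0 equals P_{d,k}(n) = ∑_{i=0}^{k} C(k,i)·C(n+d-i,d). -/
import Mathlib


/-- `P d k n = ∑_{i=0}^{k} C(k,i) · C(n+d-i, d)`. -/
def P (d k n : ℕ) : ℕ := ∑ i ∈ Finset.range (k + 1), k.choose i * (n + d - i).choose d

open Finset

/-- The counting predicate. -/
def Cond (d k n : ℕ) (x : Fin d → ℤ) : Prop :=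
  (∑ i : Fin d, if (i : ℕ) < k then |x i| else x i) ≤ (n : ℤ) ∧
  ∀ i : Fin d, k ≤ (i : ℕ) → 0 ≤ x i

/-- The simplex predicate (case `k = 0`). -/
def Q (d n : ℕ) (x : Fin d → ℤ) : Prop :=
  (∑ i : Fin d, x i) ≤ (n : ℤ) ∧ ∀ i : Fin d, 0 ≤ x i

lemma finite_pred {d n : ℕ} {p : (Fin d → ℤ) → Prop}
    (h : ∀ x, p x → ∀ i, |x i| ≤ (n : ℤ)) : Finite {x // p x} := by
  have : {x : Fin d → ℤ | p x}.Finite := by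
    refine (Set.Finite.pi fun i : Fin d => Set.finite_Icc (-(n : ℤ)) n).subset ?_
    intro x hx
    rw [Set.mem_univ_pi]
    exact fun i => Set.mem_Icc.2 (abs_le.mp (h x hx i))
  exact this.to_subtype

lemma term_nonneg {d k n : ℕ} {x : Fin d → ℤ} (h : Cond d k n x) (i : Fin d) :
    0 ≤ (if (i : ℕ) < k then |x i| else x i) := by
  split
  · exact abs_nonneg _
  · exact h.2 i (le_of_not_gt ‹_›)

instance condFinite (d k n : ℕ) : Finite {x : Fin d → ℤ // Cond d k n x} := by
  refine finite_pred (n := n) fun x hx i => ?_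
  have h1 : (if (i : ℕ) < k then |x i| else x i) ≤ (n : ℤ) :=
    le_trans (Finset.single_le_sum (fun j _ => term_nonneg hx j) (mem_univ i)) hx.1
  by_cases hik : (i : ℕ) < k
  · simpa [hik] using h1
  · rw [abs_of_nonneg (hx.2 i (le_of_not_gt hik))]
    simpa [hik] using h1

instance qFinite (d n : ℕ) : Finite {x : Fin d → ℤ // Q d n x} := by
  refine finite_pred (n := n) fun x hx i => ?_
  rw [abs_of_nonneg (hx.2 i)]
  exact le_trans (Finset.single_le_sum (fun j _ => hx.2 j) (mem_univ i)) hx.1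

lemma card_split {α : Type*} (p q : α → Prop) [Finite {x // p x}] :
    Nat.card {x // p x} =
      Nat.card {x // p x ∧ q x} + Nat.card {x // p x ∧ ¬ q x} := by
  classical
  have f1 : Finite {x // p x ∧ q x} :=
    Finite.of_injective _ (Subtype.impEmbedding _ p fun x hx => hx.1).injective
  have f2 : Finite {x // p x ∧ ¬ q x} :=
    Finite.of_injective _ (Subtype.impEmbedding _ p fun x hx => hx.1).injective
  have e : {x // p x} ≃ {x // p x ∧ q x} ⊕ {x // p x ∧ ¬ q x} :=
    (Equiv.sumCompl (fun x : {x // p x} => q x.1)).symm.trans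
      (Equiv.sumCongr (Equiv.subtypeSubtypeEquivSubtypeInter p q)
        (Equiv.subtypeSubtypeEquivSubtypeInter p fun x => ¬ q x))
  rw [Nat.card_congr e, Nat.card_sum]

/-! ### The base case `k = 0`: counting the simplex. -/

def decEquiv (d n : ℕ) :
    {x : Fin (d+1) → ℤ // Q (d+1) (n+1) x ∧ 1 ≤ x (Fin.last d)} ≃
      {x : Fin (d+1) → ℤ // Q (d+1) n x} where
  toFun x := ⟨Function.update x.1 (Fin.last d) (x.1 (Fin.last d) - 1), by
    obtain ⟨⟨hs, hn⟩, hpos⟩ := x.2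
    classical
    constructor
    · rw [Finset.sum_update_of_mem (mem_univ _)]
      rw [← Finset.add_sum_erase _ x.1 (mem_univ (Fin.last d))] at hs
      rw [show (Finset.univ \ {Fin.last d}) = Finset.univ.erase (Fin.last d) by
        rw [Finset.sdiff_singleton_eq_erase]]
      push_cast at hs ⊢
      linarith
    · intro i
      rcases eq_or_ne i (Fin.last d) with rfl | hne
      · rw [Function.update_self]; omega
      · rw [Function.update_of_ne hne]; exact hn i⟩
  invFun y := ⟨Function.update y.1 (Fin.last d) (y.1 (Fin.last d) + 1), by
    obtain ⟨hs, hn⟩ := y.2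
    classical
    refine ⟨⟨?_, ?_⟩, ?_⟩
    · rw [Finset.sum_update_of_mem (mem_univ _)]
      rw [← Finset.add_sum_erase _ y.1 (mem_univ (Fin.last d))] at hs
      rw [show (Finset.univ \ {Fin.last d}) = Finset.univ.erase (Fin.last d) by
        rw [Finset.sdiff_singleton_eq_erase]]
      push_cast at hs ⊢
      linarith
    · intro i
      rcases eq_or_ne i (Fin.last d) with rfl | hne
      · rw [Function.update_self]; have := hn (Fin.last d); omega
      · rw [Function.update_of_ne hne]; exact hn i
    · rw [Function.update_self]; have := hn (Fin.last d); omega⟩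
  left_inv x := by
    apply Subtype.ext
    simp [Function.update_idem]
  right_inv y := by
    apply Subtype.ext
    simp [Function.update_idem]

def lastZeroEquiv (d n : ℕ) :
    {x : Fin (d+1) → ℤ // Q (d+1) n x ∧ ¬ 1 ≤ x (Fin.last d)} ≃
      {y : Fin d → ℤ // Q d n y} where
  toFun x := ⟨Fin.init x.1, by
    obtain ⟨⟨hs, hn⟩, hlast⟩ := x.2
    have h0 : x.1 (Fin.last d) = 0 := le_antisymm (by omega) (hn _)
    constructor
    · rw [Fin.sum_univ_castSucc] at hs
      have : (∑ i : Fin d, Fin.init x.1 i) = ∑ i : Fin d, x.1 (Fin.castSucc i) := rfl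
      rw [this]
      omega
    · intro i; exact hn _⟩
  invFun y := ⟨Fin.snoc y.1 0, by
    obtain ⟨hs, hn⟩ := y.2
    refine ⟨⟨?_, ?_⟩, ?_⟩
    · rw [Fin.sum_univ_castSucc]
      simp only [Fin.snoc_castSucc, Fin.snoc_last, add_zero]
      exact hs
    · intro i
      refine Fin.lastCases ?_ ?_ i
      · simp
      · intro j; simp only [Fin.snoc_castSucc]; exact hn j
    · simp⟩
  left_inv x := by
    apply Subtype.ext
    obtain ⟨⟨hs, hn⟩, hlast⟩ := x.2
    have h0 : x.1 (Fin.last d) = 0 := le_antisymm (by omega) (hn _)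
    show Fin.snoc (Fin.init x.1) 0 = x.1
    rw [← h0, Fin.snoc_init_self]
  right_inv y := by
    apply Subtype.ext
    simp

lemma baseQ (d : ℕ) : ∀ n, Nat.card {x : Fin d → ℤ // Q d n x} = (n + d).choose d := by
  induction d with
  | zero =>
    intro n
    have hall : ∀ x : Fin 0 → ℤ, Q 0 n x := fun x => ⟨by simp, fun i => i.elim0⟩
    rw [Nat.card_congr (Equiv.subtypeUnivEquiv hall)]
    simp [Nat.card_unique]
  | succ d ih =>
    intro n
    induction n with
    | zero =>
      rw [card_split (Q (d+1) 0) (fun x => 1 ≤ x (Fin.last d))]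
      have e1 : Nat.card {x : Fin (d+1) → ℤ // Q (d+1) 0 x ∧ 1 ≤ x (Fin.last d)} = 0 := by
        rw [Nat.card_eq_zero]
        left
        constructor
        rintro ⟨x, ⟨hs, hn⟩, hpos⟩
        have hle : x (Fin.last d) ≤ ∑ i, x i :=
          Finset.single_le_sum (fun i _ => hn i) (mem_univ _)
        push_cast at hs
        linarith
      rw [e1, Nat.card_congr (lastZeroEquiv d 0), ih 0]
      simp
    | succ n ihn =>
      rw [card_split (Q (d+1) (n+1)) (fun x => 1 ≤ x (Fin.last d))]
      rw [Nat.card_congr (decEquiv d n), ihn, Nat.card_congr (lastZeroEquiv d (n+1)),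
        ih (n+1)]
      have h1 : n + (d+1) = n + d + 1 := by ring
      have h2 : n + 1 + d = n + d + 1 := by ring
      have h3 : n + 1 + (d + 1) = (n + d + 1) + 1 := by ring
      rw [h1, h2, h3, Nat.choose_succ_succ]
      exact Nat.add_comm _ _

/-! ### The recurrence in `k`. -/

lemma sumk1 {d k : ℕ} (hk : k < d) (x : Fin d → ℤ) :
    (∑ i : Fin d, if (i : ℕ) < k + 1 then |x i| else x i) =
      |x ⟨k, hk⟩| + ∑ i ∈ Finset.univ.erase (⟨k, hk⟩ : Fin d),
        (if (i : ℕ) < k + 1 then |x i| else x i) := by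
  rw [← Finset.add_sum_erase Finset.univ
    (fun i : Fin d => if (i : ℕ) < k + 1 then |x i| else x i)
    (mem_univ (⟨k, hk⟩ : Fin d))]
  simp

lemma sumk {d k : ℕ} (hk : k < d) (x : Fin d → ℤ) :
    (∑ i : Fin d, if (i : ℕ) < k then |x i| else x i) =
      x ⟨k, hk⟩ + ∑ i ∈ Finset.univ.erase (⟨k, hk⟩ : Fin d),
        (if (i : ℕ) < k then |x i| else x i) := by
  rw [← Finset.add_sum_erase Finset.univ
    (fun i : Fin d => if (i : ℕ) < k then |x i| else x i)
    (mem_univ (⟨k, hk⟩ : Fin d))]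
  simp

lemma erase_congr {d k : ℕ} (hk : k < d) (x y : Fin d → ℤ)
    (h : ∀ i : Fin d, i ≠ ⟨k, hk⟩ → x i = y i) :
    (∑ i ∈ Finset.univ.erase (⟨k, hk⟩ : Fin d), (if (i : ℕ) < k + 1 then |x i| else x i)) =
      ∑ i ∈ Finset.univ.erase (⟨k, hk⟩ : Fin d), (if (i : ℕ) < k then |y i| else y i) := by
  refine Finset.sum_congr rfl fun i hi => ?_
  have hne : i ≠ ⟨k, hk⟩ := Finset.ne_of_mem_erase hi
  have hv : (i : ℕ) ≠ k := fun h' => hne (Fin.ext h')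
  rw [h i hne]
  rcases Nat.lt_or_ge (i : ℕ) k with h' | h'
  · simp [h', Nat.lt_succ_of_lt h']
  · have h1 : ¬ (i : ℕ) < k + 1 := by omega
    have h2 : ¬ (i : ℕ) < k := by omega
    simp [h1, h2]

lemma cond_succ_iff {d k n : ℕ} (hk : k < d) (x : Fin d → ℤ) :
    (Cond d (k+1) n x ∧ 0 ≤ x ⟨k, hk⟩) ↔ Cond d k n x := by
  have hsum : 0 ≤ x ⟨k, hk⟩ →
      (∑ i : Fin d, if (i : ℕ) < k + 1 then |x i| else x i) =
        ∑ i : Fin d, if (i : ℕ) < k then |x i| else x i := by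
    intro hx
    rw [sumk1 hk x, sumk hk x, erase_congr hk x x (fun _ _ => rfl), abs_of_nonneg hx]
  constructor
  · rintro ⟨⟨hs, hn⟩, hj⟩
    refine ⟨by rw [← hsum hj]; exact hs, ?_⟩
    intro i hi
    rcases eq_or_ne ((i : ℕ)) k with h | h
    · have : i = ⟨k, hk⟩ := Fin.ext h
      rw [this]; exact hj
    · exact hn i (by omega)
  · intro h
    have hj : 0 ≤ x ⟨k, hk⟩ := h.2 _ (le_refl k)
    exact ⟨⟨by rw [hsum hj]; exact h.1, fun i hi => h.2 i (by omega)⟩, hj⟩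

lemma neg_forward {d k n : ℕ} (hk : k < d) (x : Fin d → ℤ)
    (h : Cond d (k+1) (n+1) x) (hneg : x ⟨k, hk⟩ < 0) :
    Cond d k n (Function.update x ⟨k, hk⟩ (-(x ⟨k, hk⟩) - 1)) := by
  obtain ⟨hs, hn⟩ := h
  have hyj : Function.update x ⟨k, hk⟩ (-(x ⟨k, hk⟩) - 1) ⟨k, hk⟩ = -(x ⟨k, hk⟩) - 1 :=
    Function.update_self _ _ _
  have hyo : ∀ i : Fin d, i ≠ ⟨k, hk⟩ →
      Function.update x ⟨k, hk⟩ (-(x ⟨k, hk⟩) - 1) i = x i :=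
    fun i hi => Function.update_of_ne hi _ _
  constructor
  · rw [sumk hk, ← erase_congr hk x _ (fun i hi => (hyo i hi).symm), hyj]
    rw [sumk1 hk x, abs_of_neg hneg] at hs
    push_cast at hs ⊢
    linarith
  · intro i hi
    rcases eq_or_ne i (⟨k, hk⟩ : Fin d) with rfl | hne
    · rw [hyj]; omega
    · rw [hyo i hne]
      have hik : (i : ℕ) ≠ k := fun h' => hne (Fin.ext h')
      exact hn i (by omega)

lemma neg_backward {d k n : ℕ} (hk : k < d) (y : Fin d → ℤ) (h : Cond d k n y) :
    Cond d (k+1) (n+1) (Function.update y ⟨k, hk⟩ (-(y ⟨k, hk⟩) - 1)) ∧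
      Function.update y ⟨k, hk⟩ (-(y ⟨k, hk⟩) - 1) ⟨k, hk⟩ < 0 := by
  obtain ⟨hs, hn⟩ := h
  have hjnn : 0 ≤ y ⟨k, hk⟩ := hn _ (le_refl k)
  have hxj : Function.update y ⟨k, hk⟩ (-(y ⟨k, hk⟩) - 1) ⟨k, hk⟩ = -(y ⟨k, hk⟩) - 1 :=
    Function.update_self _ _ _
  have hxo : ∀ i : Fin d, i ≠ ⟨k, hk⟩ →
      Function.update y ⟨k, hk⟩ (-(y ⟨k, hk⟩) - 1) i = y i :=
    fun i hi => Function.update_of_ne hi _ _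
  have hxneg : Function.update y ⟨k, hk⟩ (-(y ⟨k, hk⟩) - 1) ⟨k, hk⟩ < 0 := by
    rw [hxj]; omega
  refine ⟨⟨?_, ?_⟩, hxneg⟩
  · rw [sumk1 hk, erase_congr hk _ y hxo, abs_of_neg hxneg, hxj]
    rw [sumk hk y] at hs
    push_cast at hs ⊢
    linarith
  · intro i hi
    have hne : i ≠ (⟨k, hk⟩ : Fin d) := by
      intro h'
      have hik : (i : ℕ) = k := by rw [h']
      omega
    rw [hxo i hne]
    exact hn i (by omega)

def negEquiv (d k n : ℕ) (hk : k < d) :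
    {x : Fin d → ℤ // Cond d (k+1) (n+1) x ∧ ¬ 0 ≤ x ⟨k, hk⟩} ≃
      {x : Fin d → ℤ // Cond d k n x} where
  toFun x := ⟨Function.update x.1 ⟨k, hk⟩ (-(x.1 ⟨k, hk⟩) - 1),
    neg_forward hk x.1 x.2.1 (by have := x.2.2; omega)⟩
  invFun y := ⟨Function.update y.1 ⟨k, hk⟩ (-(y.1 ⟨k, hk⟩) - 1), by
    have h := neg_backward (n := n) hk y.1 y.2
    exact ⟨h.1, by have := h.2; omega⟩⟩
  left_inv x := by
    apply Subtype.ext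
    show Function.update _ _ _ = x.1
    simp [Function.update_idem]
  right_inv y := by
    apply Subtype.ext
    show Function.update _ _ _ = y.1
    simp [Function.update_idem]

/-! ### Properties of `P`. -/

lemma P_zero (d k : ℕ) (hk : k ≤ d) : P d k 0 = 1 := by
  unfold P
  rw [Finset.sum_eq_single 0]
  · simp
  · intro b hb hb0
    have hb1 : 1 ≤ b := Nat.one_le_iff_ne_zero.2 hb0
    have hbk : b ≤ k := Nat.lt_succ_iff.mp (Finset.mem_range.mp hb)
    have : (0 + d - b) < d := by omega
    rw [Nat.choose_eq_zero_of_lt this, mul_zero]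
  · intro h
    exact absurd (Finset.mem_range.mpr (Nat.succ_pos k)) h

lemma P_succ (d k n : ℕ) : P d (k+1) (n+1) = P d k n + P d k (n+1) := by
  unfold P
  rw [Finset.sum_range_succ' _ (k+1)]
  have expand : ∀ i ∈ Finset.range (k+1),
      (k+1).choose (i+1) * (n+1+d-(i+1)).choose d =
        k.choose i * (n+d-i).choose d + k.choose (i+1) * (n+d-i).choose d := by
    intro i _
    have h4 : n + 1 + d - (i+1) = n + d - i := by omega
    rw [h4, Nat.choose_succ_succ, add_mul]
  rw [Finset.sum_congr rfl expand, Finset.sum_add_distrib]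
  have h2 : (∑ i ∈ Finset.range (k+1), k.choose (i+1) * (n+d-i).choose d)
      + (k+1).choose 0 * (n+1+d-0).choose d
      = ∑ i ∈ Finset.range (k+1), k.choose i * (n+1+d-i).choose d := by
    rw [Finset.sum_range_succ' (fun i => k.choose i * (n+1+d-i).choose d) k,
      Finset.sum_range_succ, Nat.choose_succ_self, zero_mul, add_zero]
    have h3 : ∀ i ∈ Finset.range k,
        k.choose (i+1) * (n+d-i).choose d
          = k.choose (i+1) * (n+1+d-(i+1)).choose d := by
      intro i _
      have h4 : n + 1 + d - (i+1) = n + d - i := by omega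
      rw [h4]
    rw [Finset.sum_congr rfl h3]
    simp
  simp only [Nat.choose_zero_right, one_mul, Nat.sub_zero] at h2 ⊢
  omega

/-! ### Main result. -/

lemma cond_zero_card (d n : ℕ) :
    Nat.card {x : Fin d → ℤ // Cond d 0 n x} = Nat.card {x : Fin d → ℤ // Q d n x} :=
  Nat.card_congr (Equiv.subtypeEquivRight fun x => by simp [Cond, Q])

lemma main (d : ℕ) : ∀ k, k ≤ d → ∀ n,
    Nat.card {x : Fin d → ℤ // Cond d k n x} = P d k n := by
  intro k
  induction k with
  | zero =>
    intro _ n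
    rw [cond_zero_card, baseQ d n]
    simp [P]
  | succ k ih =>
    intro hk n
    have hkd : k < d := hk
    have hkd' : k ≤ d := le_of_lt hkd
    cases n with
    | zero =>
      rw [card_split (Cond d (k+1) 0) (fun x => 0 ≤ x ⟨k, hkd⟩)]
      have e1 : Nat.card {x : Fin d → ℤ // Cond d (k+1) 0 x ∧ 0 ≤ x ⟨k, hkd⟩} =
          Nat.card {x : Fin d → ℤ // Cond d k 0 x} :=
        Nat.card_congr (Equiv.subtypeEquivRight fun x => cond_succ_iff hkd x)
      have e2 : Nat.card {x : Fin d → ℤ // Cond d (k+1) 0 x ∧ ¬ 0 ≤ x ⟨k, hkd⟩} = 0 := by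
        rw [Nat.card_eq_zero]
        left
        constructor
        rintro ⟨x, ⟨hs, hn⟩, hneg⟩
        push_neg at hneg
        rw [sumk1 hkd x, abs_of_neg hneg] at hs
        have hterm : ∀ i ∈ Finset.univ.erase (⟨k, hkd⟩ : Fin d),
            (0 : ℤ) ≤ (if (i : ℕ) < k + 1 then |x i| else x i) := by
          intro i _
          split
          · exact abs_nonneg _
          · exact hn i (le_of_not_gt ‹_›)
        have hsum0 : (0:ℤ) ≤ ∑ i ∈ Finset.univ.erase (⟨k, hkd⟩ : Fin d),
            (if (i : ℕ) < k + 1 then |x i| else x i) := Finset.sum_nonneg hterm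
        push_cast at hs
        linarith
      rw [e1, e2, ih hkd' 0, add_zero, P_zero d k hkd', P_zero d (k+1) hk]
    | succ n =>
      rw [card_split (Cond d (k+1) (n+1)) (fun x => 0 ≤ x ⟨k, hkd⟩)]
      rw [Nat.card_congr (Equiv.subtypeEquivRight fun x => cond_succ_iff hkd x)]
      rw [Nat.card_congr (negEquiv d k n hkd)]
      rw [ih hkd' (n+1), ih hkd' n, P_succ]
      exact Nat.add_comm _ _

theorem stmt17 (d k n : ℕ) (hd : 1 ≤ d) (hk : k ≤ d) :
    Nat.card {x : Fin d → ℤ //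
        (∑ i : Fin d, if (i : ℕ) < k then |x i| else x i) ≤ (n : ℤ) ∧
        ∀ i : Fin d, k ≤ (i : ℕ) → 0 ≤ x i} = P d k n :=
  main d k hk n
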